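/- arXiv:2412.11320 — 2 statements merged into one kernel-verified Lean document; each statement's English description precedes it below -/
import Mathlib

section
/- Let c : ℝⁿ → ℝ^m be continuously differentiable, let C = {x ∈ ℝⁿ : cᵢ(x) ≥ 0 for all i}, let f : ℝⁿ → ℝⁿ be continuous, and let E ⊆ ℝⁿ be a linear subspace with orthogonal projection P : ℝⁿ → ℝⁿ onto E. Assume that at every point x ∈ C the gradients {∇cᵢ(x) : i with cᵢ(x) = 0} are linearly independent (LICQ). Let x : [0, T] → ℝⁿ be continuous, differentiable on (0, T), with x(0) ∈ C. Then the following are equivalent: (i) for every t ∈ (0, T), x(t) ∈ C and x'(t) is the unique minimizer of w ↦ ‖w − f(x(t))‖² over {w ∈ T_C(x(t)) : w − f(x(t)) ∈ E}, where T_C(x(t)) is the Bouligand tangent cone of C at x(t); (ii) for every t ∈ (0, T) there exists λ(t) ∈ ℝ^m such that x'(t) = f(x(t)) + Σᵢ λᵢ(t) P(∇cᵢ(x(t))), λᵢ(t) ≥ 0 for all i, cᵢ(x(t)) ≥ 0 for all i, and λᵢ(t) · cᵢ(x(t)) = 0 for all i. -/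
open Filter Topology RealInnerProductSpace

noncomputable section

/-- The Bouligand tangent cone of a set `S` at a point `p`: the set of directions `d`
such that there are sequences `x k ∈ S`, `x k → p`, and positive reals `t k → 0`
with `(x k - p) / t k → d`. -/
def bouligandTangentCone {H : Type*} [NormedAddCommGroup H] [InnerProductSpace ℝ H]
    (S : Set H) (p : H) : Set H :=
  {d | ∃ (x : ℕ → H) (t : ℕ → ℝ), (∀ k, x k ∈ S) ∧ (∀ k, 0 < t k) ∧
    Tendsto x atTop (𝓝 p) ∧ Tendsto t atTop (𝓝 0) ∧
    Tendsto (fun k => (t k)⁻¹ • (x k - p)) atTop (𝓝 d)}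

/-- The polar cone of a set `K`: all vectors making a non-positive inner product with
every element of `K`. -/
def polarCone {H : Type*} [NormedAddCommGroup H] [InnerProductSpace ℝ H]
    (K : Set H) : Set H :=
  {v | ∀ d ∈ K, ⟪v, d⟫ ≤ 0}

/-- `a` is the unique minimizer of `f` over `S`. -/
def IsUniqueMinOn {H : Type*} (f : H → ℝ) (S : Set H) (a : H) : Prop :=
  a ∈ S ∧ (∀ b ∈ S, f a ≤ f b) ∧ ∀ b ∈ S, (∀ u ∈ S, f b ≤ f u) → b = a

lemma farkas {H : Type*} [NormedAddCommGroup H] [InnerProductSpace ℝ H] :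
    ∀ (k : ℕ) (b : Fin k → H) (g : H),
      (∀ d : H, (∀ i, 0 ≤ ⟪b i, d⟫) → 0 ≤ ⟪g, d⟫) →
      ∃ l : Fin k → ℝ, (∀ i, 0 ≤ l i) ∧ g = ∑ i, l i • b i := by
  intro k
  induction k with
  | zero =>
    intro b g hg
    refine ⟨0, fun i => le_rfl, ?_⟩
    have h1 : 0 ≤ ⟪g, -g⟫ := hg (-g) (fun i => i.elim0)
    rw [inner_neg_right] at h1
    have : g = 0 := by
      have := real_inner_self_nonneg (x := g)
      have h2 : ⟪g, g⟫ = 0 := le_antisymm (by linarith) this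
      exact inner_self_eq_zero.mp h2
    simp [this]
  | succ n ih =>
    intro b g hg
    set a := b 0 with ha
    set rest : Fin n → H := fun i => b i.succ with hrest
    by_cases hcase : ∀ d : H, (∀ i, 0 ≤ ⟪rest i, d⟫) → 0 ≤ ⟪g, d⟫
    · obtain ⟨l, hl, hEq⟩ := ih rest g hcase
      refine ⟨Fin.cons 0 l, ?_, ?_⟩
      · intro i
        refine Fin.cases ?_ ?_ i
        · simp
        · intro j; simpa using hl j
      · rw [Fin.sum_univ_succ]
        simp [hEq]
        rfl
    · push_neg at hcase
      obtain ⟨d₀, hd₀, hgd₀⟩ := hcase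
      have had₀ : ⟪a, d₀⟫ < 0 := by
        by_contra h
        push_neg at h
        refine absurd (hg d₀ ?_) (not_le.mpr hgd₀)
        intro i
        refine Fin.cases ?_ ?_ i
        · exact h
        · intro j; exact hd₀ j
      set μ := ⟪g, d₀⟫ / ⟪a, d₀⟫ with hμ
      have hμpos : 0 < μ := div_pos_of_neg_of_neg hgd₀ had₀
      set cc : Fin n → ℝ := fun i => ⟪rest i, d₀⟫ / ⟪a, d₀⟫ with hcc
      have hccnp : ∀ i, cc i ≤ 0 := fun i =>
        div_nonpos_of_nonneg_of_nonpos (hd₀ i) had₀.le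
      set b' : Fin n → H := fun i => rest i - cc i • a with hb'
      set g' : H := g - μ • a with hg'
      have key : ∀ d : H, (∀ i, 0 ≤ ⟪b' i, d⟫) → 0 ≤ ⟪g', d⟫ := by
        intro d hd
        set d' := d - (⟪a, d⟫ / ⟪a, d₀⟫) • d₀ with hd'
        have had' : ⟪a, d'⟫ = 0 := by
          rw [hd', inner_sub_right, inner_smul_right]
          rw [div_mul_cancel₀ _ had₀.ne, sub_self]
        have hbd' : ∀ i : Fin n, ⟪rest i, d'⟫ = ⟪b' i, d⟫ := by
          intro i
          rw [hd', hb']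
          simp only [inner_sub_right, inner_sub_left, inner_smul_right, inner_smul_left,
            RCLike.star_def, starRingEnd_apply, star_trivial, hcc]
          field_simp
        have hgd' : ⟪g, d'⟫ = ⟪g', d⟫ := by
          rw [hd', hg']
          simp only [inner_sub_right, inner_sub_left, inner_smul_right, inner_smul_left,
            RCLike.star_def, starRingEnd_apply, star_trivial, hμ]
          field_simp
        have h0 : 0 ≤ ⟪g, d'⟫ := by
          refine hg d' ?_
          intro i
          refine Fin.cases ?_ ?_ i
          · exact le_of_eq had'.symm
          · intro j; rw [show b j.succ = rest j from rfl, hbd' j]; exact hd j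
        linarith [hgd' ▸ h0]
      obtain ⟨l, hl, hEq⟩ := ih b' g' key
      refine ⟨Fin.cons (μ - ∑ i, l i * cc i) l, ?_, ?_⟩
      · intro i
        refine Fin.cases ?_ ?_ i
        · have hsum : ∑ i, l i * cc i ≤ 0 :=
            Finset.sum_nonpos (fun i _ => mul_nonpos_of_nonneg_of_nonpos (hl i) (hccnp i))
          simp only [Fin.cons_zero]
          linarith
        · intro j; simpa using hl j
      · rw [Fin.sum_univ_succ]
        simp only [Fin.cons_zero, Fin.cons_succ]
        have : g = g' + μ • a := by rw [hg']; abel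
        rw [this, hEq]
        rw [sub_smul, Finset.sum_smul]
        have : ∀ i : Fin n, l i • b' i = l i • rest i - (l i * cc i) • a := by
          intro i; rw [hb', smul_sub, smul_smul]
        simp_rw [this]
        rw [Finset.sum_sub_distrib]
        have hre : ∀ i : Fin n, l i • rest i = l i • b i.succ := fun i => rfl
        simp_rw [hre]
        abel

lemma exists_dual_vec {H : Type*} [NormedAddCommGroup H] [InnerProductSpace ℝ H]
    [FiniteDimensional ℝ H] {ι : Type*} [Fintype ι] {g : ι → H}
    (hg : LinearIndependent ℝ g) : ∃ z : H, ∀ i, ⟪g i, z⟫ = 1 := by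
  classical
  set V := Submodule.span ℝ (Set.range g) with hV
  let L : H →ₗ[ℝ] (ι → ℝ) :=
    { toFun := fun v i => ⟪g i, v⟫
      map_add' := fun u v => by funext i; exact inner_add_right _ _ _
      map_smul' := fun r v => by funext i; simp [inner_smul_right] }
  let L' : V →ₗ[ℝ] (ι → ℝ) := L.comp V.subtype
  have hinj : Function.Injective L' := by
    rw [← LinearMap.ker_eq_bot]
    rw [Submodule.eq_bot_iff]
    rintro v hv
    have hvi : ∀ i, ⟪g i, (v : H)⟫ = 0 := fun i => congrFun hv i
    have hall : ∀ w ∈ V, ⟪w, (v : H)⟫ = 0 := by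
      intro w hw
      induction hw using Submodule.span_induction with
      | mem w hw => obtain ⟨i, rfl⟩ := hw; exact hvi i
      | zero => simp
      | add a b _ _ ha hb => rw [inner_add_left, ha, hb, add_zero]
      | smul r a _ ha => rw [real_inner_smul_left, ha, mul_zero]
    have : ⟪(v : H), (v : H)⟫ = 0 := hall _ v.2
    have : (v : H) = 0 := inner_self_eq_zero.mp this
    exact Subtype.ext this
  have hfr : Module.finrank ℝ V = Module.finrank ℝ (ι → ℝ) := by
    rw [finrank_span_eq_card hg, Module.finrank_pi]
  have hsurj := (LinearMap.injective_iff_surjective_of_finrank_eq_finrank hfr).mp hinj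
  obtain ⟨z, hz⟩ := hsurj (fun _ => 1)
  exact ⟨(z : H), fun i => congrFun hz i⟩

lemma bouligand_subset_linearized {H : Type*} [NormedAddCommGroup H] [InnerProductSpace ℝ H]
    [CompleteSpace H] {S : Set H} {p : H} {φ : H → ℝ}
    (hφ : DifferentiableAt ℝ φ p) (hS : ∀ y ∈ S, 0 ≤ φ y) (hp0 : φ p = 0)
    {d : H} (hd : d ∈ bouligandTangentCone S p) : 0 ≤ ⟪gradient φ p, d⟫ := by
  obtain ⟨xx, tt, hmem, hpos, hxp, ht0, hslope⟩ := hd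
  set D := fderiv ℝ φ p with hD
  have hfd : HasFDerivAt φ D p := hφ.hasFDerivAt
  have hlo : (fun y => φ y - φ p - D (y - p)) =o[𝓝 p] fun y => y - p := hfd.isLittleO
  have hlo2 : (fun k => φ (xx k) - φ p - D (xx k - p)) =o[atTop] fun k => xx k - p :=
    hlo.comp_tendsto hxp
  have hbigO : (fun k => xx k - p) =O[atTop] tt := by
    rw [Asymptotics.isBigO_iff]
    refine ⟨‖d‖ + 1, ?_⟩
    have hn : Tendsto (fun k => ‖(tt k)⁻¹ • (xx k - p)‖) atTop (𝓝 ‖d‖) := hslope.norm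
    have hev : ∀ᶠ k in atTop, ‖(tt k)⁻¹ • (xx k - p)‖ < ‖d‖ + 1 :=
      hn.eventually (Filter.Tendsto.eventually_lt_const (by linarith) tendsto_id)
    filter_upwards [hev] with k hk
    have htk : tt k ≠ 0 := (hpos k).ne'
    have : xx k - p = tt k • ((tt k)⁻¹ • (xx k - p)) := by
      rw [smul_smul, mul_inv_cancel₀ htk, one_smul]
    rw [this, norm_smul, Real.norm_eq_abs]
    calc |tt k| * ‖(tt k)⁻¹ • (xx k - p)‖ ≤ |tt k| * (‖d‖ + 1) :=
          mul_le_mul_of_nonneg_left hk.le (abs_nonneg _)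
      _ = (‖d‖ + 1) * ‖tt k‖ := by rw [Real.norm_eq_abs]; ring
  have hlo3 : (fun k => φ (xx k) - φ p - D (xx k - p)) =o[atTop] tt := hlo2.trans_isBigO hbigO
  have hlim0 : Tendsto (fun k => (φ (xx k) - φ p - D (xx k - p)) / tt k) atTop (𝓝 0) :=
    hlo3.tendsto_div_nhds_zero
  have hDlim : Tendsto (fun k => D ((tt k)⁻¹ • (xx k - p))) atTop (𝓝 (D d)) :=
    (D.continuous.tendsto d).comp hslope
  have heq : ∀ k, φ (xx k) / tt k
      = (φ (xx k) - φ p - D (xx k - p)) / tt k + D ((tt k)⁻¹ • (xx k - p)) := by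
    intro k
    have htk : tt k ≠ 0 := (hpos k).ne'
    rw [map_smul, smul_eq_mul, hp0]
    field_simp
    ring
  have hlim : Tendsto (fun k => φ (xx k) / tt k) atTop (𝓝 (D d)) := by
    have := hlim0.add hDlim
    rw [zero_add] at this
    exact this.congr (fun k => (heq k).symm)
  have hDd : 0 ≤ D d :=
    le_of_tendsto_of_tendsto' tendsto_const_nhds hlim
      (fun k => div_nonneg (hS _ (hmem k)) (hpos k).le)
  have : ⟪gradient φ p, d⟫ = D d := InnerProductSpace.toDual_symm_apply
  rw [this]; exact hDd

lemma deriv_mem_bouligand {H : Type*} [NormedAddCommGroup H] [InnerProductSpace ℝ H]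
    {S : Set H} {x : ℝ → H} {v : H} {t T : ℝ} (ht : t ∈ Set.Ioo 0 T)
    (hderiv : HasDerivAt x v t) (hmem : ∀ s ∈ Set.Ioo 0 T, x s ∈ S) :
    v ∈ bouligandTangentCone S (x t) := by
  set tt : ℕ → ℝ := fun k => (T - t) / (k + 2) with htt
  have hTt : 0 < T - t := sub_pos.mpr ht.2
  have httpos : ∀ k, 0 < tt k := fun k => div_pos hTt (by positivity)
  have httlt : ∀ k, tt k < T - t := fun k => by
    rw [htt]
    rw [div_lt_iff₀ (by positivity : (0:ℝ) < (k:ℝ) + 2)]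
    nlinarith [Nat.cast_nonneg (α := ℝ) k]
  set s : ℕ → ℝ := fun k => t + tt k with hs
  have hsI : ∀ k, s k ∈ Set.Ioo 0 T := fun k =>
    ⟨lt_add_of_lt_of_pos ht.1 (httpos k), by have := httlt k; simp only [hs]; linarith⟩
  have htt0 : Tendsto tt atTop (𝓝 0) := by
    have h1 : Tendsto (fun k : ℕ => (k : ℝ) + 2) atTop atTop :=
      tendsto_atTop_add_const_right _ _ tendsto_natCast_atTop_atTop
    have h2 : Tendsto (fun k : ℕ => ((k : ℝ) + 2)⁻¹) atTop (𝓝 0) := h1.inv_tendsto_atTop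
    have := h2.const_mul (T - t)
    rw [mul_zero] at this
    exact this.congr (fun k => by rw [htt]; ring)
  have hst : Tendsto s atTop (𝓝 t) := by
    have := htt0.const_add t
    rw [add_zero] at this
    exact this
  refine ⟨fun k => x (s k), tt, fun k => hmem _ (hsI k), httpos, ?_, htt0, ?_⟩
  · exact (hderiv.continuousAt.tendsto).comp hst
  · have hsne : Tendsto s atTop (𝓝[≠] t) := by
      rw [tendsto_nhdsWithin_iff]
      exact ⟨hst, Eventually.of_forall (fun k => (lt_add_of_pos_right t (httpos k)).ne')⟩
    have hslope := (hasDerivAt_iff_tendsto_slope.mp hderiv).comp hsne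
    refine hslope.congr (fun k => ?_)
    show slope x t (s k) = (tt k)⁻¹ • (x (s k) - x t)
    rw [slope_def_module]
    congr 1
    simp [hs]

lemma linearized_mem_bouligand {H : Type*} [NormedAddCommGroup H] [InnerProductSpace ℝ H]
    [CompleteSpace H] {m : ℕ} {c : Fin m → H → ℝ} (hc : ∀ i, ContDiff ℝ 1 (c i))
    {p : H} (hp : ∀ i, 0 ≤ c i p) {z : H}
    (hz : ∀ i, c i p = 0 → ⟪gradient (c i) p, z⟫ = 1) {d : H}
    (hd : ∀ i, c i p = 0 → 0 ≤ ⟪gradient (c i) p, d⟫) :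
    d ∈ bouligandTangentCone {y | ∀ i, 0 ≤ c i y} p := by
  classical
  -- for each k, find the time step
  have hQ : ∀ k : ℕ, ∃ τ : ℝ, 0 < τ ∧ τ < ((k : ℝ) + 1)⁻¹ ∧
      ∀ i, 0 ≤ c i (p + τ • (d + ((k : ℝ) + 1)⁻¹ • z)) := by
    intro k
    set ε : ℝ := ((k : ℝ) + 1)⁻¹ with hε
    have hεpos : 0 < ε := by positivity
    set v : H := d + ε • z with hv
    have hall : ∀ᶠ τ in 𝓝[>] (0:ℝ), ∀ i, 0 ≤ c i (p + τ • v) := by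
      rw [eventually_all]
      intro i
      by_cases hci : c i p = 0
      · -- active constraint: positive directional derivative
        have hD : HasDerivAt (fun τ : ℝ => c i (p + τ • v)) (fderiv ℝ (c i) p v) 0 := by
          have hcurve : HasDerivAt (fun τ : ℝ => p + τ • v) v 0 := by
            simpa using ((hasDerivAt_id (0:ℝ)).smul_const v).const_add p
          have hfd : HasFDerivAt (c i) (fderiv ℝ (c i) p) p :=
            ((hc i).differentiable one_ne_zero).differentiableAt.hasFDerivAt
          have hfd' : HasFDerivAt (c i) (fderiv ℝ (c i) p) (p + (0:ℝ) • v) := by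
            simpa using hfd
          have := hfd'.comp_hasDerivAt (0:ℝ) hcurve
          exact this
        have hDpos : 0 < fderiv ℝ (c i) p v := by
          have h1 : fderiv ℝ (c i) p v = ⟪gradient (c i) p, v⟫ :=
            (InnerProductSpace.toDual_symm_apply).symm
          rw [h1, hv, inner_add_right, real_inner_smul_right, hz i hci]
          have := hd i hci
          linarith
        have hslope := hasDerivAt_iff_tendsto_slope.mp hD
        have hslope' := hslope.mono_left (nhdsWithin_mono _ (fun τ hτ => ne_of_gt hτ))
        have hev : ∀ᶠ τ in 𝓝[>] (0:ℝ), 0 < slope (fun τ : ℝ => c i (p + τ • v)) 0 τ :=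
          hslope'.eventually (eventually_gt_nhds hDpos)
        filter_upwards [hev, self_mem_nhdsWithin] with τ hτ hτpos
        have h0 : c i (p + (0:ℝ) • v) = 0 := by simpa using hci
        rw [slope_def_field] at hτ
        rw [div_pos_iff] at hτ
        rcases hτ with ⟨hnum, _⟩ | ⟨_, hden⟩
        · rw [h0, sub_zero] at hnum; linarith
        · simp only [Set.mem_Ioi] at hτpos; rw [sub_zero] at hden; linarith
      · -- inactive constraint: continuity
        have hpos : 0 < c i p := lt_of_le_of_ne (hp i) (Ne.symm hci)
        have hcont : ContinuousAt (fun τ : ℝ => c i (p + τ • v)) 0 := by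
          apply (hc i).continuous.continuousAt.comp
          fun_prop
        have hval : (0:ℝ) < (fun τ : ℝ => c i (p + τ • v)) 0 := by simpa using hpos
        have hev : ∀ᶠ τ in 𝓝 (0:ℝ), 0 < c i (p + τ • v) :=
          hcont.eventually (eventually_gt_nhds hval)
        exact (hev.filter_mono nhdsWithin_le_nhds).mono (fun τ h => h.le)
    have hlt : ∀ᶠ τ in 𝓝[>] (0:ℝ), τ < ε :=
      (gt_mem_nhds hεpos).filter_mono nhdsWithin_le_nhds
    obtain ⟨τ, hτ⟩ := ((hall.and hlt).and self_mem_nhdsWithin).exists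
    exact ⟨τ, hτ.2, hτ.1.2, hτ.1.1⟩
  choose tt h1 h2 h3 using hQ
  set vv : ℕ → H := fun k => d + ((k : ℝ) + 1)⁻¹ • z with hvv
  have hinv0 : Tendsto (fun k : ℕ => ((k : ℝ) + 1)⁻¹) atTop (𝓝 0) := by
    have := tendsto_one_div_add_atTop_nhds_zero_nat (𝕜 := ℝ)
    simpa [one_div] using this
  have hvvd : Tendsto vv atTop (𝓝 d) := by
    have := (hinv0.smul_const z).const_add d
    rw [zero_smul, add_zero] at this
    exact this
  have htt0 : Tendsto tt atTop (𝓝 0) :=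
    squeeze_zero (fun k => (h1 k).le) (fun k => (h2 k).le) hinv0
  refine ⟨fun k => p + tt k • vv k, tt, fun k => h3 k, h1, ?_, htt0, ?_⟩
  · have : Tendsto (fun k => tt k • vv k) atTop (𝓝 ((0:ℝ) • d)) := htt0.smul hvvd
    rw [zero_smul] at this
    have := this.const_add p
    rw [add_zero] at this
    exact this
  · refine hvvd.congr (fun k => ?_)
    rw [add_sub_cancel_left, smul_smul, inv_mul_cancel₀ (h1 k).ne', one_smul]

/-- Under LICQ, a trajectory solves the extended projected dynamical system
`ẋ = P_{T_C(x),E}(f(x))` if and only if it solves the dynamic complementarity system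
`ẋ = f(x) + Σ λᵢ P(∇cᵢ(x))`, `0 ≤ λ ⊥ c(x) ≥ 0`. -/
theorem ePDS_iff_DCS (n m : ℕ)
    (c : Fin m → EuclideanSpace ℝ (Fin n) → ℝ)
    (hc : ∀ i, ContDiff ℝ 1 (c i))
    (C : Set (EuclideanSpace ℝ (Fin n)))
    (hC : C = {x | ∀ i, 0 ≤ c i x})
    (f : EuclideanSpace ℝ (Fin n) → EuclideanSpace ℝ (Fin n))
    (hf : Continuous f)
    (E : Submodule ℝ (EuclideanSpace ℝ (Fin n)))
    (P : EuclideanSpace ℝ (Fin n) → EuclideanSpace ℝ (Fin n))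
    (hP : ∀ u, P u = (E.orthogonalProjection u : EuclideanSpace ℝ (Fin n)))
    (licq : ∀ x ∈ C, LinearIndependent ℝ
      (fun i : {i : Fin m // c i x = 0} => gradient (c i.1) x))
    (T : ℝ)
    (x x' : ℝ → EuclideanSpace ℝ (Fin n))
    (hxcont : ContinuousOn x (Set.Icc 0 T))
    (hxderiv : ∀ t ∈ Set.Ioo 0 T, HasDerivAt x (x' t) t)
    (hx0 : x 0 ∈ C) :
    (∀ t ∈ Set.Ioo 0 T, x t ∈ C ∧
      IsUniqueMinOn (fun w => ‖w - f (x t)‖ ^ 2)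
        {w | w ∈ bouligandTangentCone C (x t) ∧ w - f (x t) ∈ E} (x' t)) ↔
    (∀ t ∈ Set.Ioo 0 T, ∃ lam : Fin m → ℝ,
      x' t = f (x t) + ∑ i, lam i • P (gradient (c i) (x t)) ∧
      (∀ i, 0 ≤ lam i) ∧
      (∀ i, 0 ≤ c i (x t)) ∧
      (∀ i, lam i * c i (x t) = 0)) := by
  classical
  subst hC
  constructor
  · -- (i) → (ii)
    intro hi t ht
    obtain ⟨hxtC, hmin⟩ := hi t ht
    obtain ⟨⟨hvT, hvE⟩, hopt, _⟩ := hmin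
    have hxtC' : ∀ i, 0 ≤ c i (x t) := hxtC
    -- dual vector for active gradients
    obtain ⟨z, hz⟩ := exists_dual_vec (licq (x t) hxtC)
    -- tangent cone is contained in the linearized cone
    have hTL : ∀ w ∈ bouligandTangentCone {y | ∀ i, 0 ≤ c i y} (x t),
        ∀ i : Fin m, c i (x t) = 0 → 0 ≤ ⟪gradient (c i) (x t), w⟫ := by
      intro w hw i hi0
      exact bouligand_subset_linearized (S := {y | ∀ i, 0 ≤ c i y})
        ((hc i).differentiable one_ne_zero).differentiableAt (fun y hy => hy i) hi0 hw
    have hgE : x' t - f (x t) ∈ E := hvE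
    -- variational inequality
    have hVI : ∀ d : EuclideanSpace ℝ (Fin n), d ∈ E →
        (∀ i : Fin m, c i (x t) = 0 → 0 ≤ ⟪gradient (c i) (x t), d⟫) →
        0 ≤ ⟪x' t - f (x t), d⟫ := by
      intro d hdE hdL
      have hfeas : ∀ θ : ℝ, 0 < θ →
          ‖x' t - f (x t)‖ ^ 2 ≤ ‖(x' t - f (x t)) + θ • d‖ ^ 2 := by
        intro θ hθ
        have hwT : x' t + θ • d ∈ bouligandTangentCone {y | ∀ i, 0 ≤ c i y} (x t) := by
          refine linearized_mem_bouligand hc hxtC' (fun i hi0 => hz ⟨i, hi0⟩) ?_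
          intro i hi0
          rw [inner_add_right, real_inner_smul_right]
          exact add_nonneg (hTL _ hvT i hi0) (mul_nonneg hθ.le (hdL i hi0))
        have hwE : (x' t + θ • d) - f (x t) ∈ E := by
          have heq : (x' t + θ • d) - f (x t) = (x' t - f (x t)) + θ • d := by abel
          rw [heq]
          exact E.add_mem hgE (E.smul_mem θ hdE)
        have h := hopt (x' t + θ • d) ⟨hwT, hwE⟩
        simpa [show (x' t + θ • d) - f (x t) = (x' t - f (x t)) + θ • d from by abel] using h
      by_contra hneg
      push_neg at hneg
      set θ : ℝ := -⟪x' t - f (x t), d⟫ / (‖d‖ ^ 2 + 1) with hθdef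
      have hθpos : 0 < θ := div_pos (neg_pos.mpr hneg) (by positivity)
      have hexp := hfeas θ hθpos
      rw [norm_add_sq_real, real_inner_smul_right, norm_smul, mul_pow,
        Real.norm_eq_abs, sq_abs] at hexp
      have hmul : θ * (‖d‖ ^ 2 + 1) = -⟪x' t - f (x t), d⟫ := by
        rw [hθdef]; field_simp
      nlinarith [hexp, hmul, hθpos, hneg, sq_nonneg θ]
    -- Farkas
    set k := Fintype.card {i : Fin m // c i (x t) = 0} with hk
    set e := (Fintype.equivFin {i : Fin m // c i (x t) = 0}) with he
    set b : Fin k → EuclideanSpace ℝ (Fin n) :=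
      fun j => P (gradient (c (e.symm j).1) (x t)) with hb
    have hfhyp : ∀ dd : EuclideanSpace ℝ (Fin n),
        (∀ j, 0 ≤ ⟪b j, dd⟫) → 0 ≤ ⟪x' t - f (x t), dd⟫ := by
      intro dd hdd
      have hPd : (↑(E.orthogonalProjection dd) : EuclideanSpace ℝ (Fin n)) ∈ E :=
        Submodule.coe_mem _
      have hact : ∀ i, c i (x t) = 0 →
          0 ≤ ⟪gradient (c i) (x t), (↑(E.orthogonalProjection dd) :
            EuclideanSpace ℝ (Fin n))⟫ := by
        intro i hi0
        have h1 := hdd (e ⟨i, hi0⟩)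
        rw [hb] at h1
        simp only [Equiv.symm_apply_apply] at h1
        rw [hP] at h1
        change 0 ≤ ⟪E.starProjection _, dd⟫ at h1
        rw [Submodule.inner_starProjection_left_eq_right] at h1
        exact h1
      have h1 := hVI _ hPd hact
      have h2 : ⟪x' t - f (x t), (↑(E.orthogonalProjection dd) :
          EuclideanSpace ℝ (Fin n))⟫ = ⟪x' t - f (x t), dd⟫ := by
        change ⟪_, E.starProjection dd⟫ = _
        rw [← Submodule.inner_starProjection_left_eq_right,
          Submodule.starProjection_eq_self_iff.mpr hgE]
      rwa [h2] at h1
    obtain ⟨l, hl, hleq⟩ := farkas k b (x' t - f (x t)) hfhyp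
    refine ⟨fun i => if h : c i (x t) = 0 then l (e ⟨i, h⟩) else 0, ?_, ?_, hxtC', ?_⟩
    · -- main equation
      have hsum : ∑ i : Fin m, (if h : c i (x t) = 0 then l (e ⟨i, h⟩) else 0) •
          P (gradient (c i) (x t)) = x' t - f (x t) := by
        rw [hleq]
        rw [← Finset.sum_filter_of_ne (p := fun i => c i (x t) = 0)
          (fun i _ hne => by
            by_contra hcon
            exact hne (by rw [dif_neg hcon, zero_smul]))]
        rw [Finset.sum_subtype (p := fun i => c i (x t) = 0)
          (Finset.filter (fun i => c i (x t) = 0) Finset.univ)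
          (fun i => by simp) (fun i => (if h : c i (x t) = 0 then l (e ⟨i, h⟩) else 0) •
            P (gradient (c i) (x t)))]
        rw [← Equiv.sum_comp e (fun j => l j • b j)]
        refine Finset.sum_congr rfl ?_
        rintro ⟨i, hi0⟩ _
        rw [dif_pos hi0, hb]
        simp only [Equiv.symm_apply_apply]
      rw [hsum]
      abel
    · intro i
      by_cases h : c i (x t) = 0
      · simp only [dif_pos h]; exact hl _
      · simp only [dif_neg h]; exact le_rfl
    · intro i
      by_cases h : c i (x t) = 0
      · rw [h, mul_zero]
      · simp only [dif_neg h]; rw [zero_mul]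
  · -- (ii) → (i)
    intro hii t ht
    obtain ⟨lam, hsum, hlamnn, hcnn, hcomp⟩ := hii t ht
    have hxC : ∀ s ∈ Set.Ioo 0 T, x s ∈ {y | ∀ i, 0 ≤ c i y} := by
      intro s hs
      obtain ⟨_, _, _, h, _⟩ := hii s hs
      exact h
    have hvT : x' t ∈ bouligandTangentCone {y | ∀ i, 0 ≤ c i y} (x t) :=
      deriv_mem_bouligand ht (hxderiv t ht) hxC
    -- derivative-level complementarity
    have hderivcomp : ∀ i : Fin m, c i (x t) = 0 → ⟪gradient (c i) (x t), x' t⟫ = 0 := by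
      intro i hi0
      have hD : HasDerivAt (fun s => c i (x s)) (fderiv ℝ (c i) (x t) (x' t)) t :=
        (((hc i).differentiable one_ne_zero).differentiableAt.hasFDerivAt).comp_hasDerivAt
          t (hxderiv t ht)
      have hmin : IsLocalMin (fun s => c i (x s)) t := by
        filter_upwards [isOpen_Ioo.mem_nhds ht] with s hs
        obtain ⟨_, _, _, h, _⟩ := hii s hs
        show c i (x t) ≤ c i (x s)
        rw [hi0]
        exact h i
      have h0 := hmin.hasDerivAt_eq_zero hD
      have : ⟪gradient (c i) (x t), x' t⟫ = fderiv ℝ (c i) (x t) (x' t) :=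
        InnerProductSpace.toDual_symm_apply
      rw [this, h0]
    have hgeq : x' t - f (x t) = ∑ i, lam i • P (gradient (c i) (x t)) := by
      rw [hsum]; abel
    have hgE : x' t - f (x t) ∈ E := by
      rw [hgeq]
      exact Submodule.sum_mem _ (fun i _ => E.smul_mem _
        (by rw [hP]; exact Submodule.coe_mem _))
    -- variational inequality
    have hVI : ∀ w, w ∈ bouligandTangentCone {y | ∀ i, 0 ≤ c i y} (x t) →
        w - f (x t) ∈ E → 0 ≤ ⟪x' t - f (x t), w - x' t⟫ := by
      intro w hwT hwE
      have hwx'E : w - x' t ∈ E := by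
        have heq : w - x' t = (w - f (x t)) - (x' t - f (x t)) := by abel
        rw [heq]
        exact E.sub_mem hwE hgE
      rw [hgeq, sum_inner]
      refine Finset.sum_nonneg ?_
      intro i _
      rw [real_inner_smul_left]
      rcases eq_or_lt_of_le (hlamnn i) with h0 | hpos
      · rw [← h0, zero_mul]
      · have hact : c i (x t) = 0 :=
          (mul_eq_zero.mp (hcomp i)).resolve_left hpos.ne'
        have hinner : ⟪P (gradient (c i) (x t)), w - x' t⟫
            = ⟪gradient (c i) (x t), w - x' t⟫ := by
          rw [hP]
          change ⟪E.starProjection _, _⟫ = _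
          rw [Submodule.inner_starProjection_left_eq_right,
            Submodule.starProjection_eq_self_iff.mpr hwx'E]
        rw [hinner, inner_sub_right, hderivcomp i hact, sub_zero]
        refine mul_nonneg hpos.le ?_
        exact bouligand_subset_linearized (S := {y | ∀ i, 0 ≤ c i y})
          ((hc i).differentiable one_ne_zero).differentiableAt (fun y hy => hy i) hact hwT
    have hexpand : ∀ w : EuclideanSpace ℝ (Fin n), ‖w - f (x t)‖ ^ 2 =
        ‖x' t - f (x t)‖ ^ 2 + 2 * ⟪x' t - f (x t), w - x' t⟫ + ‖w - x' t‖ ^ 2 := by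
      intro w
      have heq : w - f (x t) = (x' t - f (x t)) + (w - x' t) := by abel
      rw [heq, norm_add_sq_real]
    have hx'S : x' t ∈ {w | w ∈ bouligandTangentCone {y | ∀ i, 0 ≤ c i y} (x t) ∧
        w - f (x t) ∈ E} := ⟨hvT, hgE⟩
    refine ⟨hcnn, hx'S, ?_, ?_⟩
    · intro w hw
      have h1 := hVI w hw.1 hw.2
      have h2 := hexpand w
      simp only []
      nlinarith [sq_nonneg ‖w - x' t‖]
    · intro w hw hwmin
      have h1 := hwmin (x' t) hx'S
      have h2 := hVI w hw.1 hw.2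
      have h3 := hexpand w
      simp only [] at h1
      have h4 : ‖w - x' t‖ ^ 2 ≤ 0 := by nlinarith
      have h5 : w - x' t = 0 := by
        rw [← norm_eq_zero]
        nlinarith [norm_nonneg (w - x' t), sq_nonneg ‖w - x' t‖]
      exact sub_eq_zero.mp h5
end
end

section
/- Let c : ℝⁿ → ℝ^m be continuously differentiable, let C = {x ∈ ℝⁿ : cᵢ(x) ≥ 0 for all i}, and let x̄ ∈ C. Denote by A(x̄) = {i : cᵢ(x̄) = 0} the active set. If the gradients {∇cᵢ(x̄) : i ∈ A(x̄)} are linearly independent (LICQ), then the Bouligand tangent cone of C at x̄ equals the linearized cone {d ∈ ℝⁿ : ⟨∇cᵢ(x̄), d⟩ ≥ 0 for all i ∈ A(x̄)}. -/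
open Filter Topology RealInnerProductSpace

noncomputable section

lemma inner_gradient_eq_fderiv {n : ℕ} (f : EuclideanSpace ℝ (Fin n) → ℝ)
    (x y : EuclideanSpace ℝ (Fin n)) : ⟪gradient f x, y⟫ = fderiv ℝ f x y :=
  InnerProductSpace.toDual_symm_apply

lemma forward_aux {n : ℕ} (f : EuclideanSpace ℝ (Fin n) → ℝ) (hf : ContDiff ℝ 1 f)
    (xb d : EuclideanSpace ℝ (Fin n)) (hfxb : f xb = 0)
    (x : ℕ → EuclideanSpace ℝ (Fin n)) (t : ℕ → ℝ)
    (hxC : ∀ k, 0 ≤ f (x k)) (ht : ∀ k, 0 < t k)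
    (hx : Tendsto x atTop (𝓝 xb))
    (hq : Tendsto (fun k => (t k)⁻¹ • (x k - xb)) atTop (𝓝 d)) :
    0 ≤ ⟪gradient f xb, d⟫ := by
  set g := gradient f xb with hg
  have hdiff : DifferentiableAt ℝ f xb := ((hf.differentiable one_ne_zero)).differentiableAt
  have hfd : HasFDerivAt f (fderiv ℝ f xb) xb := hdiff.hasFDerivAt
  have ho := hfd.isLittleO
  set Ek : ℕ → ℝ := fun k => (t k)⁻¹ * (f (x k) - f xb - fderiv ℝ f xb (x k - xb)) with hEk
  have hE : Tendsto Ek atTop (𝓝 0) := by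
    rw [NormedAddCommGroup.tendsto_nhds_zero]
    intro ε hε
    have hB : (0:ℝ) < ‖d‖ + 1 := by positivity
    have hε' : 0 < ε / (2 * (‖d‖ + 1)) := by positivity
    have h1 := hx.eventually (ho.def hε')
    have h2 : ∀ᶠ k in atTop, ‖(t k)⁻¹ • (x k - xb)‖ < ‖d‖ + 1 :=
      hq.norm.eventually_lt_const (by linarith)
    filter_upwards [h1, h2] with k hk1 hk2
    have htk : (0:ℝ) < (t k)⁻¹ := inv_pos.2 (ht k)
    have hnorm : ‖(t k)⁻¹ • (x k - xb)‖ = (t k)⁻¹ * ‖x k - xb‖ := by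
      rw [norm_smul, Real.norm_eq_abs, abs_of_pos htk]
    have : ‖Ek k‖ ≤ ε / (2 * (‖d‖ + 1)) * (‖d‖ + 1) := by
      calc ‖Ek k‖ = (t k)⁻¹ * ‖f (x k) - f xb - fderiv ℝ f xb (x k - xb)‖ := by
            rw [hEk]; simp only [norm_mul, Real.norm_eq_abs, abs_of_pos htk]
        _ ≤ (t k)⁻¹ * (ε / (2 * (‖d‖ + 1)) * ‖x k - xb‖) := by
            apply mul_le_mul_of_nonneg_left hk1 htk.le
        _ = ε / (2 * (‖d‖ + 1)) * ((t k)⁻¹ * ‖x k - xb‖) := by ring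
        _ = ε / (2 * (‖d‖ + 1)) * ‖(t k)⁻¹ • (x k - xb)‖ := by rw [hnorm]
        _ ≤ ε / (2 * (‖d‖ + 1)) * (‖d‖ + 1) := by
            exact mul_le_mul_of_nonneg_left hk2.le hε'.le
    have heq : ε / (2 * (‖d‖ + 1)) * (‖d‖ + 1) = ε / 2 := by field_simp
    rw [heq] at this
    linarith
  have hmain : Tendsto (fun k => ⟪g, (t k)⁻¹ • (x k - xb)⟫ + Ek k) atTop (𝓝 (⟪g, d⟫ + 0)) :=
    (tendsto_const_nhds.inner hq).add hE
  have heq : ∀ k, ⟪g, (t k)⁻¹ • (x k - xb)⟫ + Ek k = (t k)⁻¹ * f (x k) := by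
    intro k
    rw [real_inner_smul_right, hg, inner_gradient_eq_fderiv, hEk, hfxb]
    ring
  have hlim : Tendsto (fun k => (t k)⁻¹ * f (x k)) atTop (𝓝 ⟪g, d⟫) := by
    have := hmain.congr heq
    simpa using this
  exact ge_of_tendsto' hlim fun k => mul_nonneg (inv_pos.2 (ht k)).le (hxC k)

lemma backward_aux (n m : ℕ)
    (c : Fin m → EuclideanSpace ℝ (Fin n) → ℝ)
    (hc : ∀ i, ContDiff ℝ 1 (c i))
    (xb : EuclideanSpace ℝ (Fin n)) (hxb : ∀ i, 0 ≤ c i xb)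
    (licq : LinearIndependent ℝ
      (fun i : {i : Fin m // c i xb = 0} => gradient (c i.1) xb))
    (d : EuclideanSpace ℝ (Fin n))
    (hd : ∀ i, c i xb = 0 → 0 ≤ ⟪gradient (c i) xb, d⟫) :
    ∃ (x : ℕ → EuclideanSpace ℝ (Fin n)) (t : ℕ → ℝ),
      (∀ k, ∀ i, 0 ≤ c i (x k)) ∧ (∀ k, 0 < t k) ∧
      Tendsto x atTop (𝓝 xb) ∧ Tendsto t atTop (𝓝 0) ∧
      Tendsto (fun k => (t k)⁻¹ • (x k - xb)) atTop (𝓝 d) := by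
  classical
  set ι := {i : Fin m // c i xb = 0} with hι
  set g : ι → EuclideanSpace ℝ (Fin n) := fun i => gradient (c i.1) xb with hgdef
  set L : (ι → ℝ) →L[ℝ] EuclideanSpace ℝ (Fin n) :=
    LinearMap.toContinuousLinearMap (Fintype.linearCombination ℝ g) with hLdef
  have hLapply : ∀ w : ι → ℝ, L w = ∑ j, w j • g j := fun w => rfl
  -- the Gram map
  have inner_L : ∀ (v : EuclideanSpace ℝ (Fin n)) (w : ι → ℝ), ⟪v, L w⟫ = ∑ j, w j * ⟪v, g j⟫ := by
    intro v w
    rw [hLapply, inner_sum]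
    exact Finset.sum_congr rfl fun j _ => real_inner_smul_right v (g j) (w j)
  set GramL : (ι → ℝ) →ₗ[ℝ] (ι → ℝ) :=
    { toFun := fun w i => ⟪g i, L w⟫
      map_add' := by intro a b; funext i; simp [map_add, inner_add_right]
      map_smul' := by
        intro r a
        funext i
        simp only [RingHom.id_apply, Pi.smul_apply, smul_eq_mul]
        rw [map_smul, real_inner_smul_right] } with hGramL
  have hGinj : Function.Injective GramL := by
    have h0 : ∀ w, GramL w = 0 → w = 0 := by
      intro w hw
      have hLw : L w = 0 := by
        rw [← inner_self_eq_zero (𝕜 := ℝ)]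
        have : ⟪L w, L w⟫ = ∑ j, w j * ⟪g j, L w⟫ := by
          rw [hLapply, sum_inner]
          exact Finset.sum_congr rfl fun j _ => real_inner_smul_left (g j) (L w) (w j)
        rw [this]
        apply Finset.sum_eq_zero
        intro j _
        have hj : (⟪g j, L w⟫ : ℝ) = 0 := by
          have := congrFun hw j
          exact this
        rw [hj, mul_zero]
      have hsum : ∑ j : ι, w j • g j = 0 := by rw [← hLapply]; exact hLw
      have hli := Fintype.linearIndependent_iff.mp licq
      funext j
      exact hli w hsum j
    intro a b hab
    have := h0 (a - b) (by rw [map_sub, hab, sub_self])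
    exact sub_eq_zero.mp this
  have hGsurj : Function.Surjective GramL := LinearMap.injective_iff_surjective.mp hGinj
  set GramE : (ι → ℝ) ≃ₗ[ℝ] (ι → ℝ) := LinearEquiv.ofBijective GramL ⟨hGinj, hGsurj⟩ with hGE
  set Gram : (ι → ℝ) ≃L[ℝ] (ι → ℝ) := GramE.toContinuousLinearEquiv with hGram
  have hGram_apply : ∀ w, Gram w = GramL w := fun w => rfl
  -- the map F
  set M : (ℝ × (ι → ℝ)) →L[ℝ] EuclideanSpace ℝ (Fin n) :=
    ((ContinuousLinearMap.fst ℝ ℝ (ι → ℝ)).smulRight d) +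
      L.comp (ContinuousLinearMap.snd ℝ ℝ (ι → ℝ)) with hMdef
  have hM_apply : ∀ p : ℝ × (ι → ℝ), M p = p.1 • d + L p.2 := fun p => rfl
  set Fm : ℝ × (ι → ℝ) → ℝ × (ι → ℝ) :=
    fun p => (p.1, fun i => c i.1 (xb + M p) - p.1 * ⟪g i, d⟫) with hFm
  set D : (ℝ × (ι → ℝ)) ≃L[ℝ] (ℝ × (ι → ℝ)) :=
    (ContinuousLinearEquiv.refl ℝ ℝ).prodCongr Gram with hD
  -- strict derivative of Fm at (0,0)
  have hA : HasStrictFDerivAt (fun p : ℝ × (ι → ℝ) => xb + M p) M (0, 0) :=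
    M.hasStrictFDerivAt.const_add xb
  have hA0 : xb + M ((0 : ℝ), (0 : ι → ℝ)) = xb := by
    rw [hM_apply]; simp
  set N : ι → (ℝ × (ι → ℝ)) →L[ℝ] ℝ := fun i =>
    (fderiv ℝ (c i.1) xb).comp M - ⟪g i, d⟫ • (ContinuousLinearMap.fst ℝ ℝ (ι → ℝ)) with hN
  have hNi : ∀ i : ι, HasStrictFDerivAt
      (fun p : ℝ × (ι → ℝ) => c i.1 (xb + M p) - p.1 * ⟪g i, d⟫) (N i) (0, 0) := by
    intro i
    have hci : HasStrictFDerivAt (c i.1) (fderiv ℝ (c i.1) xb) xb :=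
      (hc i.1).contDiffAt.hasStrictFDerivAt one_ne_zero
    have hci' : HasStrictFDerivAt (c i.1) (fderiv ℝ (c i.1) xb)
        (xb + M ((0:ℝ), (0 : ι → ℝ))) := by rw [hA0]; exact hci
    have hcomp := hci'.comp ((0:ℝ), (0 : ι → ℝ)) hA
    exact hcomp.sub (hasStrictFDerivAt_fst.mul_const ⟪g i, d⟫)
  have hsnd : HasStrictFDerivAt
      (fun p : ℝ × (ι → ℝ) => fun i : ι => c i.1 (xb + M p) - p.1 * ⟪g i, d⟫)
      (ContinuousLinearMap.pi N) (0, 0) := hasStrictFDerivAt_pi.2 hNi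
  have hF' : HasStrictFDerivAt Fm
      ((ContinuousLinearMap.fst ℝ ℝ (ι → ℝ)).prod (ContinuousLinearMap.pi N)) (0, 0) :=
    HasStrictFDerivAt.prodMk hasStrictFDerivAt_fst hsnd
  have hDeq : ((ContinuousLinearMap.fst ℝ ℝ (ι → ℝ)).prod (ContinuousLinearMap.pi N))
      = (D : (ℝ × (ι → ℝ)) →L[ℝ] (ℝ × (ι → ℝ))) := by
    apply ContinuousLinearMap.ext
    intro p
    refine Prod.ext ?_ ?_
    · rfl
    · show (ContinuousLinearMap.pi N) p = Gram p.2
      funext i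
      show fderiv ℝ (c i.1) xb (M p) - ⟪gradient (c i.1) xb, d⟫ * p.1
        = ⟪gradient (c i.1) xb, L p.2⟫
      rw [← inner_gradient_eq_fderiv, hM_apply, inner_add_right, real_inner_smul_right]
      ring
  have hFs : HasStrictFDerivAt Fm (D : (ℝ × (ι → ℝ)) →L[ℝ] (ℝ × (ι → ℝ))) (0, 0) :=
    hDeq ▸ hF'
  have hF0 : Fm ((0:ℝ), (0 : ι → ℝ)) = (0, 0) := by
    rw [hFm]
    refine Prod.ext rfl ?_
    funext i
    simp only [hA0]
    simp [i.2]
  -- local inverse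
  set Finv := hFs.localInverse Fm D (0, 0) with hFinvdef
  have hInv : HasStrictFDerivAt Finv
      ((D.symm : (ℝ × (ι → ℝ)) →L[ℝ] (ℝ × (ι → ℝ)))) (0, 0) := by
    have := hFs.to_localInverse
    rwa [hF0] at this
  have hright : ∀ᶠ p in 𝓝 ((0:ℝ), (0 : ι → ℝ)), Fm (Finv p) = p := by
    have := hFs.eventually_right_inverse
    rwa [hF0] at this
  have hFinv0 : Finv (0, 0) = (0, 0) := by
    have := hFs.localInverse_apply_image
    rwa [hF0] at this
  set φ : ℝ → ℝ × (ι → ℝ) := fun t => Finv (t, 0) with hφdef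
  set ψ : ℝ → EuclideanSpace ℝ (Fin n) := fun t => xb + M (φ t) with hψdef
  have hDsymm : ∀ τ : ℝ, D.symm (τ, (0 : ι → ℝ)) = (τ, 0) := by
    intro τ
    have h1 : D (τ, (0 : ι → ℝ)) = (τ, 0) := by
      rw [hD]; simp [ContinuousLinearEquiv.prodCongr_apply]
    rw [← h1, ContinuousLinearEquiv.symm_apply_apply]
    exact h1.symm
  have hpair : HasFDerivAt (fun t : ℝ => ((t, 0) : ℝ × (ι → ℝ)))
      (ContinuousLinearMap.inl ℝ ℝ (ι → ℝ)) 0 := by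
    have := HasFDerivAt.prodMk (hasFDerivAt_id (0:ℝ)) (hasFDerivAt_const (𝕜 := ℝ) (0 : ι → ℝ) (0:ℝ))
    exact this
  have hφ : HasFDerivAt φ
      ((D.symm : (ℝ × (ι → ℝ)) →L[ℝ] (ℝ × (ι → ℝ))).comp
        (ContinuousLinearMap.inl ℝ ℝ (ι → ℝ))) 0 := by
    have h0 := HasFDerivAt.comp (x := (0:ℝ)) (hInv.hasFDerivAt) hpair
    simpa [Function.comp_def] using h0
  have hψF : HasFDerivAt ψ
      (M.comp ((D.symm : (ℝ × (ι → ℝ)) →L[ℝ] (ℝ × (ι → ℝ))).comp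
        (ContinuousLinearMap.inl ℝ ℝ (ι → ℝ)))) 0 :=
    (M.hasFDerivAt.comp 0 hφ).const_add xb
  have hψ : HasDerivAt ψ d 0 := by
    have h := hψF.hasDerivAt
    have : (M.comp ((D.symm : (ℝ × (ι → ℝ)) →L[ℝ] (ℝ × (ι → ℝ))).comp
        (ContinuousLinearMap.inl ℝ ℝ (ι → ℝ)))) 1 = d := by
      simp only [ContinuousLinearMap.coe_comp', Function.comp_apply,
        ContinuousLinearMap.inl_apply, ContinuousLinearEquiv.coe_coe]
      rw [hDsymm, hM_apply]
      simp
    rwa [this] at h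
  have hψ0 : ψ 0 = xb := by
    rw [hψdef]
    simp only [hφdef, hFinv0]
    exact hA0
  -- eventual properties
  have h1ev : ∀ᶠ t in 𝓝 (0:ℝ), Fm (φ t) = (t, 0) := by
    have hcont : Tendsto (fun t : ℝ => ((t, 0) : ℝ × (ι → ℝ))) (𝓝 0) (𝓝 (0, 0)) := by
      have : Continuous (fun t : ℝ => ((t, 0) : ℝ × (ι → ℝ))) :=
        continuous_id.prodMk continuous_const
      exact this.tendsto' 0 (0, 0) rfl
    exact hcont.eventually hright
  have h2ev : ∀ᶠ t in 𝓝 (0:ℝ), ∀ i : Fin m, c i xb ≠ 0 → 0 < c i (ψ t) := by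
    rw [eventually_all]
    intro i
    by_cases hi : c i xb = 0
    · exact Eventually.of_forall fun t h => absurd hi h
    · have hpos : 0 < c i xb := lt_of_le_of_ne (hxb i) (Ne.symm hi)
      have hcont : ContinuousAt (fun t => c i (ψ t)) 0 :=
        ((hc i).continuous.continuousAt).comp hψ.continuousAt
      have hval : 0 < c i (ψ 0) := by rwa [hψ0]
      filter_upwards [hcont.eventually (eventually_gt_nhds hval)] with t ht h'
      exact ht
  obtain ⟨δ, hδ, hδall⟩ := Metric.eventually_nhds_iff.mp (h1ev.and h2ev)
  set ts : ℕ → ℝ := fun k => δ / 2 * (1 / (k + 1)) with hts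
  have htpos : ∀ k, 0 < ts k := fun k => by positivity
  have htlt : ∀ k, dist (ts k) 0 < δ := by
    intro k
    rw [Real.dist_eq, sub_zero, abs_of_pos (htpos k)]
    have h1k : 1 / ((k:ℝ) + 1) ≤ 1 := by
      rw [div_le_one (by positivity)]
      linarith [Nat.cast_nonneg (α := ℝ) k]
    have : ts k ≤ δ / 2 * 1 := by
      apply mul_le_mul_of_nonneg_left h1k (by linarith)
    simp only [mul_one] at this
    linarith
  have ht0 : Tendsto ts atTop (𝓝 0) := by
    rw [hts]
    have h := tendsto_one_div_add_atTop_nhds_zero_nat.const_mul (δ / 2)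
    simpa using h
  refine ⟨fun k => ψ (ts k), ts, ?_, htpos, ?_, ht0, ?_⟩
  · intro k i
    obtain ⟨hk1, hk2⟩ := hδall (htlt k)
    by_cases hact : c i xb = 0
    · have hfst : (φ (ts k)).1 = ts k := congrArg Prod.fst hk1
      have hsnd := congrFun (congrArg Prod.snd hk1) ⟨i, hact⟩
      have : c i (ψ (ts k)) - (φ (ts k)).1 * ⟪g ⟨i, hact⟩, d⟫ = 0 := hsnd
      rw [hfst] at this
      have hval : c i (ψ (ts k)) = ts k * ⟪g ⟨i, hact⟩, d⟫ := by linarith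
      rw [hval]
      exact mul_nonneg (htpos k).le (hd i hact)
    · exact (hk2 i hact).le
  · have := hψ.continuousAt.tendsto.comp ht0
    rwa [hψ0] at this
  · have hs := hasDerivAt_iff_tendsto_slope.mp hψ
    have htne : Tendsto ts atTop (𝓝[≠] 0) :=
      tendsto_nhdsWithin_of_tendsto_nhds_of_eventually_within _ ht0
        (Eventually.of_forall fun k => (htpos k).ne')
    have := hs.comp htne
    simp only [Function.comp_def, slope_def_module, hψ0, sub_zero] at this
    exact this

/-- Under LICQ, the Bouligand tangent cone of a finitely defined set
`C = {x : c(x) ≥ 0}` at `x̄ ∈ C` equals the linearized cone of the active constraints. -/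
theorem tangentCone_eq_linearized_cone (n m : ℕ)
    (c : Fin m → EuclideanSpace ℝ (Fin n) → ℝ)
    (hc : ∀ i, ContDiff ℝ 1 (c i))
    (C : Set (EuclideanSpace ℝ (Fin n)))
    (hC : C = {x | ∀ i, 0 ≤ c i x})
    (xb : EuclideanSpace ℝ (Fin n)) (hxb : xb ∈ C)
    (licq : LinearIndependent ℝ
      (fun i : {i : Fin m // c i xb = 0} => gradient (c i.1) xb)) :
    bouligandTangentCone C xb =
      {d | ∀ i, c i xb = 0 → 0 ≤ ⟪gradient (c i) xb, d⟫} := by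
  ext d
  constructor
  · rintro ⟨x, t, hxC, ht, hx, htt, hq⟩ i hi
    exact forward_aux (c i) (hc i) xb d hi x t
      (fun k => by have := hxC k; rw [hC] at this; exact this i) ht hx hq
  · intro hd
    obtain ⟨x, t, hmem, ht, hx, htt, hq⟩ :=
      backward_aux n m c hc xb (by rwa [hC] at hxb) licq d hd
    exact ⟨x, t, fun k => by rw [hC]; exact hmem k, ht, hx, htt, hq⟩
end
end
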